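/- Let Y be a separated scheme and let G be a finite group acting on Y by scheme automorphisms. For a point y ∈ Y, let G_y denote the subgroup of those g ∈ G that fix the point y and induce the identity automorphism on the residue field κ(y). Then the non-tame locus T = {y ∈ Y : char κ(y) is a prime dividing the order of G_y} is a closed subset of Y. -/

import Mathlib

universe u

open AlgebraicGeometry CategoryTheory

/-- The stabilizer `G_y` of a point `y` under an action of a group `G` on a scheme `Y` by
scheme automorphisms: the subgroup of those `g ∈ G` fixing the point `y` and inducing the
identity automorphism on the residue field `κ(y)`. -/
def schemeStabilizer {Y : Scheme.{u}} {G : Type*} [Group G]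
    (φ : G →* Aut Y) (y : Y) : Set G :=
  {g | ∃ h : (φ g).hom.base y = y,
    (φ g).hom.residueFieldMap y = eqToHom (by rw [h])}

namespace NonTameAux

open Limits

variable {Y : Scheme.{u}}

/-- A point `y` is fixed (including on residue fields) by an endomorphism `f` iff the
canonical map `Spec κ(y) ⟶ Y` equalizes `f` and the identity. -/
lemma fixed_iff (f : Y ⟶ Y) (y : Y) :
    (∃ h : f.base y = y, f.residueFieldMap y = eqToHom (by rw [h])) ↔
      Y.fromSpecResidueField y ≫ f = Y.fromSpecResidueField y := by
  constructor
  · rintro ⟨h, e⟩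
    calc Y.fromSpecResidueField y ≫ f
        = Spec.map (f.residueFieldMap y) ≫ Y.fromSpecResidueField _ :=
          (Scheme.Hom.SpecMap_residueFieldMap_fromSpecResidueField f y).symm
      _ = Spec.map (Y.residueFieldCongr h).hom ≫ Y.fromSpecResidueField _ := by rw [e]; rfl
      _ = Y.fromSpecResidueField y := Y.residueFieldCongr_fromSpecResidueField h
  · intro H
    obtain ⟨s⟩ : Nonempty (Spec (Y.residueField y)) := inferInstance
    have h : f.base y = y := by
      have := congrArg (fun (g : Spec (Y.residueField y) ⟶ Y) => g.base s) H
      simpa using this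
    refine ⟨h, ?_⟩
    have key : Spec.map (f.residueFieldMap y) ≫ Y.fromSpecResidueField (f.base y) =
        Spec.map (Y.residueFieldCongr h).hom ≫ Y.fromSpecResidueField (f.base y) := by
      rw [Scheme.Hom.SpecMap_residueFieldMap_fromSpecResidueField f y, H,
        Y.residueFieldCongr_fromSpecResidueField h]
    have := Spec.map_injective ((cancel_mono (Y.fromSpecResidueField (f.base y))).mp key)
    rw [this]; rfl

/-- On a separated scheme, the locus of points fixed (including on residue fields) by an
endomorphism is closed. -/
lemma isClosed_fixedLocus [Y.IsSeparated] (f : Y ⟶ Y) :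
    IsClosed {y : Y | Y.fromSpecResidueField y ≫ f = Y.fromSpecResidueField y} := by
  haveI : IsSeparated (Over.mk (terminal.from Y)).hom :=
    inferInstanceAs (IsSeparated (terminal.from Y))
  let X' : Over (⊤_ Scheme.{u}) := Over.mk (terminal.from Y)
  let f' : X' ⟶ X' := Over.homMk f
  let ι : (equalizer f' (𝟙 X')).left ⟶ Y := (equalizer.ι f' (𝟙 X')).left
  haveI : IsClosedImmersion ι := isClosedImmersion_equalizer_ι_left f' (𝟙 X')
  have key : {y : Y | Y.fromSpecResidueField y ≫ f = Y.fromSpecResidueField y} =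
      Set.range ι.base := by
    ext y
    constructor
    · intro H
      let q : Over.mk (terminal.from (Spec (Y.residueField y))) ⟶ X' :=
        Over.homMk (Y.fromSpecResidueField y)
      have hq : q ≫ f' = q ≫ 𝟙 X' := by
        ext1
        simpa [q, f', X'] using H
      obtain ⟨s⟩ : Nonempty (Spec (Y.residueField y)) := inferInstance
      refine ⟨(equalizer.lift q hq).left.base s, ?_⟩
      have h1 : ι.base ((equalizer.lift q hq).left.base s) = q.left.base s := by
        rw [← Scheme.Hom.comp_apply, ← Over.comp_left, equalizer.lift_ι]
      have h2 : q.left.base s = y := Scheme.fromSpecResidueField_apply y s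
      exact h1.trans h2
    · rintro ⟨e, rfl⟩
      have cond : ι ≫ f = ι := by
        have := congrArg CommaMorphism.left (equalizer.condition f' (𝟙 X'))
        simpa [ι, f', X'] using this
      have hinj : Function.Injective (ι.residueFieldMap e) := RingHom.injective _
      have hsurj : Function.Surjective (ι.residueFieldMap e) := by
        intro b
        obtain ⟨t, rfl⟩ := (equalizer f' (𝟙 X')).left.residue_surjective e b
        obtain ⟨u, rfl⟩ := ι.stalkMap_surjective e t
        exact ⟨Y.residue (ι.base e) u, congrArg (fun k => k.hom u)
          (Scheme.residue_residueFieldMap ι e)⟩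
      have hriso : IsIso (ι.residueFieldMap e) := by
        rw [ConcreteCategory.isIso_iff_bijective]
        exact ⟨hinj, hsurj⟩
      have key2 : Spec.map (ι.residueFieldMap e) ≫ (Y.fromSpecResidueField (ι.base e) ≫ f) =
          Spec.map (ι.residueFieldMap e) ≫ Y.fromSpecResidueField (ι.base e) := by
        rw [← Category.assoc, Scheme.Hom.SpecMap_residueFieldMap_fromSpecResidueField ι e,
          Category.assoc, cond]
      exact (cancel_epi (Spec.map (ι.residueFieldMap e))).mp key2
  rw [key]
  exact (IsClosedImmersion.base_closed ι).isClosed_range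

/-- The locus of points whose residue field has a given prime characteristic is closed. -/
lemma isClosed_charLocus (Y : Scheme.{u}) {p : ℕ} (hp : p.Prime) :
    IsClosed {y : Y | ringChar (Y.residueField y) = p} := by
  have key : {y : Y | ringChar (Y.residueField y) = p} =
      (↑(Y.basicOpen ((p : Γ(Y, ⊤)))) : Set Y)ᶜ := by
    ext y
    have hcast : Y.Γevaluation y ((p : Γ(Y, ⊤))) = (p : Y.residueField y) := map_natCast _ p
    have hbo : ((p : ℕ) : Y.residueField y) = 0 ↔ y ∉ Y.basicOpen ((p : Γ(Y, ⊤))) := by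
      rw [← hcast]
      exact Y.evaluation_eq_zero_iff_notMem_basicOpen (U := ⊤) y (by trivial) _
    simp only [Set.mem_setOf_eq, Set.mem_compl_iff, SetLike.mem_coe, ← hbo, ringChar.spec]
    constructor
    · intro h; rw [h]
    · intro h
      rcases hp.eq_one_or_self_of_dvd _ h with h1 | h1
      · exfalso
        have h0 : ((1 : ℕ) : Y.residueField y) = 0 :=
          (ringChar.spec _ 1).mpr (h1 ▸ dvd_refl _)
        rw [Nat.cast_one] at h0
        exact one_ne_zero h0
      · exact h1
  rw [key]
  exact (Y.basicOpen _).isOpen.isClosed_compl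

variable {G : Type*} [Group G] (φ : G →* Aut Y)

lemma mem_schemeStabilizer_iff (y : Y) (g : G) :
    g ∈ schemeStabilizer φ y ↔
      Y.fromSpecResidueField y ≫ (φ g).hom = Y.fromSpecResidueField y :=
  fixed_iff (φ g).hom y

/-- The scheme-theoretic stabilizer as a subgroup. -/
def stabSubgroup (y : Y) : Subgroup G where
  carrier := schemeStabilizer φ y
  one_mem' := by
    rw [mem_schemeStabilizer_iff]
    rw [map_one]
    exact Category.comp_id _
  mul_mem' := by
    intro a b ha hb
    rw [mem_schemeStabilizer_iff] at ha hb ⊢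
    have : (φ (a * b)).hom = (φ b).hom ≫ (φ a).hom := by
      rw [map_mul, Aut.Aut_mul_def]
      rfl
    rw [this, ← Category.assoc, hb, ha]
  inv_mem' := by
    intro a ha
    rw [mem_schemeStabilizer_iff] at ha ⊢
    have : (φ a⁻¹).hom = (φ a).inv := by
      rw [map_inv, Aut.Aut_inv_def]
      rfl
    rw [this]
    nth_rewrite 1 [← ha]
    rw [Category.assoc]; erw [Iso.hom_inv_id]; rw [Category.comp_id]

end NonTameAux

open NonTameAux

/-- let `Y` be a separated scheme and `G` a finite group acting on `Y` by
scheme automorphisms. Then the non-tame locus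
`T = {y ∈ Y : char κ(y) is a prime dividing the order of G_y}` is closed in `Y`. -/
theorem nonTameLocus_isClosed {Y : Scheme.{u}} [Y.IsSeparated]
    {G : Type*} [Group G] [Finite G] (φ : G →* Aut Y) :
    IsClosed {y : Y | ∃ p : ℕ, p.Prime ∧
      ringChar (Y.residueField y) = p ∧ p ∣ Nat.card (schemeStabilizer φ y)} := by
  have main : {y : Y | ∃ p : ℕ, p.Prime ∧
      ringChar (Y.residueField y) = p ∧ p ∣ Nat.card (schemeStabilizer φ y)} =
      ⋃ g : G, (if (orderOf g).Prime then
        ({y : Y | Y.fromSpecResidueField y ≫ (φ g).hom = Y.fromSpecResidueField y} ∩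
         {y : Y | ringChar (Y.residueField y) = orderOf g}) else ∅) := by
    ext y
    simp only [Set.mem_setOf_eq, Set.mem_iUnion]
    constructor
    · rintro ⟨p, hp, hchar, hdvd⟩
      haveI : Fact p.Prime := ⟨hp⟩
      have hdvd' : p ∣ Nat.card (stabSubgroup φ y) := hdvd
      obtain ⟨x, hx⟩ := exists_prime_orderOf_dvd_card' (G := stabSubgroup φ y) p hdvd'
      have hox : orderOf (x : G) = p := (Subgroup.orderOf_coe x).trans hx
      refine ⟨↑x, ?_⟩
      rw [if_pos (hox ▸ hp)]
      exact ⟨(mem_schemeStabilizer_iff φ y _).mp x.2, by rw [hox]; exact hchar⟩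
    · rintro ⟨g, hy⟩
      by_cases hg : (orderOf g).Prime
      · rw [if_pos hg] at hy
        obtain ⟨h1, h2⟩ := hy
        refine ⟨orderOf g, hg, h2, ?_⟩
        have hg' : g ∈ stabSubgroup φ y := (mem_schemeStabilizer_iff φ y g).mpr h1
        have hd := orderOf_dvd_natCard (⟨g, hg'⟩ : stabSubgroup φ y)
        rw [Subgroup.orderOf_mk] at hd
        exact hd
      · rw [if_neg hg] at hy
        exact absurd hy (Set.notMem_empty y)
  rw [main]
  apply isClosed_iUnion_of_finite
  intro g
  split_ifs with h
  · exact (isClosed_fixedLocus _).inter (isClosed_charLocus Y h)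
  · exact isClosed_empty
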